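/- arXiv:1103.2822 — 2 statements merged into one kernel-verified Lean document; each statement's English description precedes it below -/
import Mathlib

section
/- Let q : ℝ → ℝ³ be a unit-norm curve with q̇ = ω × q, and let ξ : ℝ → ℝ³ satisfy ξ·q = 0 everywhere. If δq = ξ × q and δq̇ = δω × q + ω × (ξ × q) for some δω with δω·q = 0, then ξ̇ = (q qᵀ ω̂) ξ + (I - q qᵀ) δω, where ω̂ is the skew matrix such that ω̂ x = ω × x. -/
open Matrix
open scoped InnerProductSpace

/-- `ℝ³` with the Euclidean inner product and norm. -/
abbrev E3 : Type := EuclideanSpace ℝ (Fin 3)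

/-- The cross product on `ℝ³`. -/
noncomputable def cross (x y : E3) : E3 := WithLp.toLp 2 (crossProduct x y)

/-- The hat map: `hat x` is the skew-symmetric matrix with `(hat x).mulVec y = x × y`. -/
def hat (x : E3) : Matrix (Fin 3) (Fin 3) ℝ :=
  !![0, -x 2, x 1; x 2, 0, -x 0; -x 1, x 0, 0]

private lemma comp_proj {f : ℝ → E3} {d : E3} {t : ℝ}
    (hf : HasDerivAt f d t) (i : Fin 3) :
    HasDerivAt (fun s => f s i) (d i) t := by
  have := (EuclideanSpace.proj (𝕜 := ℝ) i).hasFDerivAt.comp_hasDerivAt t hf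
  exact this

private lemma cross_comp (x y : E3) :
    cross x y 0 = x 1 * y 2 - x 2 * y 1 ∧
    cross x y 1 = x 2 * y 0 - x 0 * y 2 ∧
    cross x y 2 = x 0 * y 1 - x 1 * y 0 := by
  refine ⟨?_, ?_, ?_⟩ <;> simp [cross, crossProduct]

/-- Linearized attitude kinematics on `S²`: if `δq = ξ × q` and
`δq̇ = δω × q + ω × (ξ × q)`, then `ξ̇ = (q qᵀ ω̂) ξ + (I - q qᵀ) δω`. -/
theorem linearized_kinematics_on_sphere
    (q ω ξ δω ξ' : ℝ → E3)
    (hunit : ∀ t : ℝ, ‖q t‖ = 1)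
    (horthω : ∀ t : ℝ, ⟪q t, ω t⟫_ℝ = 0)
    (horthξ : ∀ t : ℝ, ⟪q t, ξ t⟫_ℝ = 0)
    (horthδω : ∀ t : ℝ, ⟪q t, δω t⟫_ℝ = 0)
    (hq : ∀ t : ℝ, HasDerivAt q (cross (ω t) (q t)) t)
    (hξ : ∀ t : ℝ, HasDerivAt ξ (ξ' t) t)
    (hδq : ∀ t : ℝ, HasDerivAt (fun s => cross (ξ s) (q s))
      (cross (δω t) (q t) + cross (ω t) (cross (ξ t) (q t))) t) :
    ∀ t : ℝ, ξ' t =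
      (vecMulVec (q t) (q t) * hat (ω t)).mulVec (ξ t)
        + ((1 : Matrix (Fin 3) (Fin 3) ℝ) - vecMulVec (q t) (q t)).mulVec (δω t) := by
  intro t
  -- component derivatives
  have hqc : ∀ i, HasDerivAt (fun s => q s i) (cross (ω t) (q t) i) t :=
    fun i => comp_proj (hq t) i
  have hξc : ∀ i, HasDerivAt (fun s => ξ s i) (ξ' t i) t :=
    fun i => comp_proj (hξ t) i
  -- unit norm in coordinates
  have h1 : q t 0 * q t 0 + q t 1 * q t 1 + q t 2 * q t 2 = 1 := by
    have := real_inner_self_eq_norm_mul_norm (q t)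
    rw [hunit t] at this
    simp only [PiLp.inner_apply, Fin.sum_univ_three, RCLike.inner_apply, conj_trivial] at this
    linear_combination this
  have h2 : q t 0 * ω t 0 + q t 1 * ω t 1 + q t 2 * ω t 2 = 0 := by
    have := horthω t
    simp [PiLp.inner_apply, Fin.sum_univ_three] at this
    linear_combination this
  have h3 : q t 0 * ξ t 0 + q t 1 * ξ t 1 + q t 2 * ξ t 2 = 0 := by
    have := horthξ t
    simp [PiLp.inner_apply, Fin.sum_univ_three] at this
    linear_combination this
  have h4 : q t 0 * δω t 0 + q t 1 * δω t 1 + q t 2 * δω t 2 = 0 := by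
    have := horthδω t
    simp [PiLp.inner_apply, Fin.sum_univ_three] at this
    linear_combination this
  -- derivative of ⟪q, ξ⟫ = 0 in coordinates
  have h5 : cross (ω t) (q t) 0 * ξ t 0 + q t 0 * ξ' t 0
      + (cross (ω t) (q t) 1 * ξ t 1 + q t 1 * ξ' t 1)
      + (cross (ω t) (q t) 2 * ξ t 2 + q t 2 * ξ' t 2) = 0 := by
    have hF : HasDerivAt (fun s => q s 0 * ξ s 0 + q s 1 * ξ s 1 + q s 2 * ξ s 2)
        (cross (ω t) (q t) 0 * ξ t 0 + q t 0 * ξ' t 0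
          + (cross (ω t) (q t) 1 * ξ t 1 + q t 1 * ξ' t 1)
          + (cross (ω t) (q t) 2 * ξ t 2 + q t 2 * ξ' t 2)) t :=
      (((hqc 0).mul (hξc 0)).add ((hqc 1).mul (hξc 1))).add ((hqc 2).mul (hξc 2))
    have hF0 : HasDerivAt (fun s : ℝ => q s 0 * ξ s 0 + q s 1 * ξ s 1 + q s 2 * ξ s 2)
        (0 : ℝ) t := by
      have heq : (fun s : ℝ => q s 0 * ξ s 0 + q s 1 * ξ s 1 + q s 2 * ξ s 2)
          = fun _ => (0 : ℝ) := by
        funext s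
        have := horthξ s
        simp [PiLp.inner_apply, Fin.sum_univ_three] at this
        linear_combination this
      rw [heq]
      exact hasDerivAt_const t 0
    exact hF.unique hF0
  -- cross product equation, componentwise
  have hE : ξ' t 1 * q t 2 + ξ t 1 * cross (ω t) (q t) 2
        - (ξ' t 2 * q t 1 + ξ t 2 * cross (ω t) (q t) 1)
        = (cross (δω t) (q t) + cross (ω t) (cross (ξ t) (q t))) 0 ∧
      ξ' t 2 * q t 0 + ξ t 2 * cross (ω t) (q t) 0
        - (ξ' t 0 * q t 2 + ξ t 0 * cross (ω t) (q t) 2)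
        = (cross (δω t) (q t) + cross (ω t) (cross (ξ t) (q t))) 1 ∧
      ξ' t 0 * q t 1 + ξ t 0 * cross (ω t) (q t) 1
        - (ξ' t 1 * q t 0 + ξ t 1 * cross (ω t) (q t) 0)
        = (cross (δω t) (q t) + cross (ω t) (cross (ξ t) (q t))) 2 := by
    refine ⟨?_, ?_, ?_⟩
    · have hd := comp_proj (hδq t) 0
      have heq : (fun s : ℝ => cross (ξ s) (q s) 0)
          = fun s => ξ s 1 * q s 2 - ξ s 2 * q s 1 := by
        funext s; exact (cross_comp (ξ s) (q s)).1
      rw [heq] at hd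
      have hd' : HasDerivAt (fun s => ξ s 1 * q s 2 - ξ s 2 * q s 1)
          (ξ' t 1 * q t 2 + ξ t 1 * cross (ω t) (q t) 2
            - (ξ' t 2 * q t 1 + ξ t 2 * cross (ω t) (q t) 1)) t :=
        ((hξc 1).mul (hqc 2)).sub ((hξc 2).mul (hqc 1))
      exact hd'.unique hd
    · have hd := comp_proj (hδq t) 1
      have heq : (fun s : ℝ => cross (ξ s) (q s) 1)
          = fun s => ξ s 2 * q s 0 - ξ s 0 * q s 2 := by
        funext s; exact (cross_comp (ξ s) (q s)).2.1
      rw [heq] at hd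
      have hd' : HasDerivAt (fun s => ξ s 2 * q s 0 - ξ s 0 * q s 2)
          (ξ' t 2 * q t 0 + ξ t 2 * cross (ω t) (q t) 0
            - (ξ' t 0 * q t 2 + ξ t 0 * cross (ω t) (q t) 2)) t :=
        ((hξc 2).mul (hqc 0)).sub ((hξc 0).mul (hqc 2))
      exact hd'.unique hd
    · have hd := comp_proj (hδq t) 2
      have heq : (fun s : ℝ => cross (ξ s) (q s) 2)
          = fun s => ξ s 0 * q s 1 - ξ s 1 * q s 0 := by
        funext s; exact (cross_comp (ξ s) (q s)).2.2
      rw [heq] at hd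
      have hd' : HasDerivAt (fun s => ξ s 0 * q s 1 - ξ s 1 * q s 0)
          (ξ' t 0 * q t 1 + ξ t 0 * cross (ω t) (q t) 1
            - (ξ' t 1 * q t 0 + ξ t 1 * cross (ω t) (q t) 0)) t :=
        ((hξc 0).mul (hqc 1)).sub ((hξc 1).mul (hqc 0))
      exact hd'.unique hd
  obtain ⟨E0, E1, E2⟩ := hE
  -- expand all cross products appearing in the scalar equations
  obtain ⟨c1, c2, c3⟩ := cross_comp (ω t) (q t)
  obtain ⟨d1, d2, d3⟩ := cross_comp (δω t) (q t)
  obtain ⟨k1, k2, k3⟩ := cross_comp (ξ t) (q t)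
  obtain ⟨m1, m2, m3⟩ := cross_comp (ω t) (cross (ξ t) (q t))
  simp only [PiLp.add_apply, c1, c2, c3, d1, d2, d3, m1, m2, m3, k1, k2, k3] at E0 E1 E2 h5
  -- now prove the goal componentwise
  set a := q t 0; set b := q t 1; set c := q t 2
  set u := ω t 0; set v := ω t 1; set w := ω t 2
  set x := ξ t 0; set y := ξ t 1; set z := ξ t 2
  set p := δω t 0; set r := δω t 1; set s := δω t 2
  set X := ξ' t 0; set Y := ξ' t 1; set Z := ξ' t 2
  funext i
  fin_cases i <;>
    simp [Matrix.mulVec, Matrix.mul_apply, Matrix.vecMulVec_apply, hat,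
      Matrix.sub_apply, Matrix.one_apply, Fin.sum_univ_three, dotProduct]
  · show X = _
    linear_combination a*h5 + b*E2 - c*E1 - (X-p)*h1 + (b*z-c*y)*h2 + (c*v-b*w)*h3
  · show Y = _
    linear_combination b*h5 + c*E0 - a*E2 - (Y-r)*h1 + (c*x-a*z)*h2 + (a*w-c*u)*h3
  · show Z = _
    linear_combination c*h5 + a*E1 - b*E0 - (Z-s)*h1 + (a*y-b*x)*h2 + (b*u-a*v)*h3
end

section
/- Let x(t) = (ξ(t), δω(t)) ∈ ℝ⁶ solve ẋ = A x where A is the linearized spherical pendulum matrix along a solution (q(t), ω(t)) of the closed-loop dynamics. If the constraints q(0)·ξ(0) = 0 and -ω(0)·(q(0) × ξ(0)) + q(0)·δω(0) = 0 hold at t = 0, then q(t)·ξ(t) = 0 and -ω(t)·(q(t) × ξ(t)) + q(t)·δω(t) = 0 for all t; i.e., the constraint set Cx = 0 is flow-invariant. -/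
open Matrix
open scoped InnerProductSpace

/-- Reinterpret a plain vector as an element of Euclidean space. -/
def toE3 (x : Fin 3 → ℝ) : E3 := WithLp.toLp 2 x

lemma coordDeriv {f : ℝ → E3} {f' : E3} {t : ℝ} (h : HasDerivAt f f' t) (i : Fin 3) :
    HasDerivAt (fun s => f s i) (f' i) t := by
  have := (EuclideanSpace.proj (𝕜 := ℝ) i).hasFDerivAt.comp_hasDerivAt t h
  simp at this
  exact this

/-- The constraint set `C x = 0` of the linearized spherical pendulum dynamics
`ẋ = A x`, `x = (ξ, δω)`, is flow-invariant: if `q(0)⬝ξ(0) = 0` and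
`-ω(0)⬝(q(0) × ξ(0)) + q(0)⬝δω(0) = 0`, then these constraints hold for all time. -/
theorem linearized_constraints_flow_invariant
    (qd : E3) (hqd : ‖qd‖ = 1) (kq kω : ℝ) (hkq : 0 < kq) (hkω : 0 < kω)
    (q ω ξ δω : ℝ → E3)
    (hunit : ∀ t : ℝ, ‖q t‖ = 1)
    (horth : ∀ t : ℝ, ⟪q t, ω t⟫_ℝ = 0)
    (hq : ∀ t : ℝ, HasDerivAt q (cross (ω t) (q t)) t)
    (hω : ∀ t : ℝ, HasDerivAt ω (-(kω • ω t) - kq • cross qd (q t)) t)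
    (hξ : ∀ t : ℝ, HasDerivAt ξ
      (toE3 ((vecMulVec (q t) (q t) * hat (ω t)).mulVec (ξ t))
        + toE3 (((1 : Matrix (Fin 3) (Fin 3) ℝ) - vecMulVec (q t) (q t)).mulVec (δω t))) t)
    (hδω : ∀ t : ℝ, HasDerivAt δω
      (toE3 ((kq • (hat qd * hat (q t))).mulVec (ξ t)) - kω • δω t) t)
    (h10 : ⟪q 0, ξ 0⟫_ℝ = 0)
    (h20 : -⟪ω 0, cross (q 0) (ξ 0)⟫_ℝ + ⟪q 0, δω 0⟫_ℝ = 0) :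
    ∀ t : ℝ, ⟪q t, ξ t⟫_ℝ = 0 ∧ -⟪ω t, cross (q t) (ξ t)⟫_ℝ + ⟪q t, δω t⟫_ℝ = 0 := by
  have hq' : ∀ (t : ℝ) (i : Fin 3), HasDerivAt (fun s => q s i) (cross (ω t) (q t) i) t :=
    fun t i => coordDeriv (hq t) i
  have hω' : ∀ (t : ℝ) (i : Fin 3),
      HasDerivAt (fun s => ω s i) ((-(kω • ω t) - kq • cross qd (q t)) i) t :=
    fun t i => coordDeriv (hω t) i
  have hξ' : ∀ (t : ℝ) (i : Fin 3),
      HasDerivAt (fun s => ξ s i)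
        ((toE3 ((vecMulVec (q t) (q t) * hat (ω t)).mulVec (ξ t))
          + toE3 (((1 : Matrix (Fin 3) (Fin 3) ℝ) - vecMulVec (q t) (q t)).mulVec (δω t))) i) t :=
    fun t i => coordDeriv (hξ t) i
  have hδω' : ∀ (t : ℝ) (i : Fin 3),
      HasDerivAt (fun s => δω s i)
        ((toE3 ((kq • (hat qd * hat (q t))).mulVec (ξ t)) - kω • δω t) i) t :=
    fun t i => coordDeriv (hδω t) i
  have hq2 : ∀ s : ℝ, q s 0 * q s 0 + q s 1 * q s 1 + q s 2 * q s 2 = 1 := by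
    intro s
    have h := real_inner_self_eq_norm_sq (q s)
    rw [hunit s] at h
    simp only [PiLp.inner_apply, Fin.sum_univ_three, RCLike.inner_apply, conj_trivial] at h
    linear_combination h
  have hor : ∀ s : ℝ, q s 0 * ω s 0 + q s 1 * ω s 1 + q s 2 * ω s 2 = 0 := by
    intro s
    have h := horth s
    simp [PiLp.inner_apply, Fin.sum_univ_three] at h
    linear_combination h
  set u : ℝ → ℝ := fun s => q s 0 * ξ s 0 + q s 1 * ξ s 1 + q s 2 * ξ s 2 with hudef
  have hu : ∀ s : ℝ, HasDerivAt u 0 s := by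
    intro s
    have H := (((hq' s 0).mul (hξ' s 0)).add ((hq' s 1).mul (hξ' s 1))).add
      ((hq' s 2).mul (hξ' s 2))
    refine H.congr_deriv ?_
    symm
    simp [cross, crossProduct, toE3, hat, Matrix.mulVec, Matrix.mul_apply,
      Matrix.vecMulVec_apply, Fin.sum_univ_three, dotProduct, Matrix.one_apply,
      Matrix.sub_apply, PiLp.add_apply, PiLp.sub_apply, PiLp.smul_apply]
    linear_combination -(q s 0 * (ω s 1 * ξ s 2 - ω s 2 * ξ s 1)
      + q s 1 * (ω s 2 * ξ s 0 - ω s 0 * ξ s 2)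
      + q s 2 * (ω s 0 * ξ s 1 - ω s 1 * ξ s 0)
      - (q s 0 * δω s 0 + q s 1 * δω s 1 + q s 2 * δω s 2)) * hq2 s
  have hdiffu : Differentiable ℝ u := fun s => (hu s).differentiableAt
  have hu0 : ∀ s : ℝ, u s = 0 := by
    intro s
    have hconst := is_const_of_deriv_eq_zero hdiffu (fun x => (hu x).deriv) s 0
    have hu00 : u 0 = 0 := by
      have h := h10
      simp [PiLp.inner_apply, Fin.sum_univ_three] at h
      simp only [hudef]
      linear_combination h
    rw [hconst, hu00]
  have hu0e : ∀ s : ℝ, q s 0 * ξ s 0 + q s 1 * ξ s 1 + q s 2 * ξ s 2 = 0 := by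
    intro s
    have := hu0 s
    rwa [hudef] at this
  set v : ℝ → ℝ := fun s =>
    -(ω s 0 * (q s 1 * ξ s 2 - q s 2 * ξ s 1) + ω s 1 * (q s 2 * ξ s 0 - q s 0 * ξ s 2)
      + ω s 2 * (q s 0 * ξ s 1 - q s 1 * ξ s 0))
    + (q s 0 * δω s 0 + q s 1 * δω s 1 + q s 2 * δω s 2) with hvdef
  have hvinner : ∀ s : ℝ, -⟪ω s, cross (q s) (ξ s)⟫_ℝ + ⟪q s, δω s⟫_ℝ = v s := by
    intro s
    simp [hvdef, cross, crossProduct, PiLp.inner_apply, Fin.sum_univ_three]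
    ring
  have hv : ∀ s : ℝ, HasDerivAt v (-kω * v s) s := by
    intro s
    have hc0 := ((hq' s 1).mul (hξ' s 2)).sub ((hq' s 2).mul (hξ' s 1))
    have hc1 := ((hq' s 2).mul (hξ' s 0)).sub ((hq' s 0).mul (hξ' s 2))
    have hc2 := ((hq' s 0).mul (hξ' s 1)).sub ((hq' s 1).mul (hξ' s 0))
    have H := ((((hω' s 0).mul hc0).add ((hω' s 1).mul hc1)).add ((hω' s 2).mul hc2)).neg.add
      ((((hq' s 0).mul (hδω' s 0)).add ((hq' s 1).mul (hδω' s 1))).add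
        ((hq' s 2).mul (hδω' s 2)))
    refine H.congr_deriv ?_
    symm
    simp [hvdef, cross, crossProduct, toE3, hat, Matrix.mulVec, Matrix.mul_apply,
      Matrix.vecMulVec_apply, Fin.sum_univ_three, dotProduct, Matrix.one_apply,
      Matrix.sub_apply, PiLp.add_apply, PiLp.sub_apply, PiLp.smul_apply]
    linear_combination (ω s 0 * ξ s 0 + ω s 1 * ξ s 1 + ω s 2 * ξ s 2) * hor s
      - (ω s 0 ^ 2 + ω s 1 ^ 2 + ω s 2 ^ 2) * hu0e s
  have hg : ∀ s : ℝ, HasDerivAt (fun x => Real.exp (kω * x) * v x) 0 s := by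
    intro s
    have he : HasDerivAt (fun x : ℝ => Real.exp (kω * x)) (Real.exp (kω * s) * kω) s := by
      simpa using ((hasDerivAt_id s).const_mul kω).exp
    have := he.mul (hv s)
    refine this.congr_deriv ?_
    ring
  have hv0 : v 0 = 0 := by
    have := hvinner 0
    rw [h20] at this
    linarith
  have hvz : ∀ s : ℝ, v s = 0 := by
    intro s
    have hconst : Real.exp (kω * s) * v s = Real.exp (kω * 0) * v 0 :=
      is_const_of_deriv_eq_zero (f := fun x => Real.exp (kω * x) * v x)
        (fun x => (hg x).differentiableAt) (fun x => (hg x).deriv) s 0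
    rw [hv0, mul_zero] at hconst
    exact (mul_eq_zero.mp hconst).resolve_left (Real.exp_ne_zero _)
  intro t
  constructor
  · have : ⟪q t, ξ t⟫_ℝ = u t := by
      simp [hudef, PiLp.inner_apply, Fin.sum_univ_three]
      ring
    rw [this, hu0 t]
  · rw [hvinner t, hvz t]
end
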